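/- arXiv:2603.01531 — 2 statements merged into one kernel-verified Lean document; each statement's English description precedes it below -/
import Mathlib

section
/- Commutator order estimate (leading term): let α be a loop at x of order at least r and β a loop at x of order at least s, with r ≤ s. Then the commutator loop [α,β] = α⋆β⋆α^{-1}⋆β^{-1} has order at least r+s, and for 1-forms ω_1,...,ω_{r+s}: ∫_{[α,β]} ω_1···ω_{r+s} = (∫_α ω_1···ω_r)(∫_β ω_{r+1}···ω_{r+s}) - (∫_β ω_1···ω_s)(∫_α ω_{s+1}···ω_{r+s}). -/
open Finset

attribute [local instance] Classical.propDecidable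

/-- A digraph: vertex type `V`, arrow relation without self-loops. -/
structure Digraph' (V : Type*) where
  Arrow : V → V → Prop
  irrefl : ∀ v, ¬ Arrow v v

/-- A step of a path map: an arrow `a → b` traversed forward, an arrow `a → b`
traversed backward (from `b` to `a`), or a trivial arrow at a vertex. -/
inductive PStep (V : Type*) where
  | fwd : V → V → PStep V
  | bwd : V → V → PStep V
  | triv : V → PStep V

namespace PStep
variable {V : Type*}

def src : PStep V → V
  | fwd a _ => a
  | bwd _ b => b
  | triv a => a

def tgt : PStep V → V
  | fwd _ b => b
  | bwd a _ => a
  | triv a => a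

/-- The step uses an actual arrow of `G` (or is trivial). -/
def ok (G : Digraph' V) : PStep V → Prop
  | fwd a b => G.Arrow a b
  | bwd a b => G.Arrow a b
  | triv _ => True

/-- The inverse step. -/
def inv : PStep V → PStep V
  | fwd a b => bwd a b
  | bwd a b => fwd a b
  | triv a => triv a

/-- Pairing `⟨ω, s⟩` of a 1-form with a step: `ω(a)` forward, `-ω(a)` backward,
`0` on trivial arrows. -/
def pair {K : Type*} [Field K] (ω : V → V → K) : PStep V → K
  | fwd a b => ω a b
  | bwd a b => - ω a b
  | triv _ => 0

end PStep

/-- `σ 1, …, σ n` are the steps of a path map `I_n → G`. -/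
def IsPathMap {V : Type*} (G : Digraph' V) (n : ℕ) (σ : ℕ → PStep V) : Prop :=
  (∀ t, 1 ≤ t → t ≤ n → (σ t).ok G) ∧
  (∀ t, 1 ≤ t → t < n → (σ t).tgt = (σ (t + 1)).src)

/-- Volume number of a finite sequence: product of factorials of multiplicities. -/
def volFin {r : ℕ} (g : Fin r → ℕ) : ℕ :=
  ∏ k ∈ Finset.image g Finset.univ,
    Nat.factorial ((Finset.univ.filter (fun j => g j = k)).card)

/-- The iterated integral `∫_α ω_1 ⋯ ω_r` along a path map of length `n`
with steps `σ 1, …, σ n`. -/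
noncomputable def iint (K : Type*) [Field K] {V : Type*} (n : ℕ) (σ : ℕ → PStep V)
    (r : ℕ) (ω : Fin r → V → V → K) : K :=
  ∑ f ∈ Finset.univ.filter (fun f : Fin r → Fin n => Monotone f),
    (∏ i, PStep.pair (ω i) (σ ((f i : ℕ) + 1))) / (volFin (fun i => (f i : ℕ)) : K)

/-- Concatenation of step sequences: the first `n` steps from `σ`, then steps of `τ`. -/
def concatP {V : Type*} (n : ℕ) (σ τ : ℕ → PStep V) : ℕ → PStep V :=
  fun t => if t ≤ n then σ t else τ (t - n)

/-- The inverse path map of a path map of length `n`. -/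
def invP {V : Type*} (n : ℕ) (σ : ℕ → PStep V) : ℕ → PStep V :=
  fun t => (σ (n + 1 - t)).inv

/-- Multiplicity of the value `k` in the (1-indexed) sequence `t 1, …, t r`. -/
def multN (t : ℕ → ℕ) (r k : ℕ) : ℕ := ((Finset.Icc 1 r).filter (fun j => t j = k)).card

/-- Volume number of the sequence `t 1, …, t r`: the product over all `k` of
the factorial of the multiplicity of `k`. -/
noncomputable def volN (t : ℕ → ℕ) (r : ℕ) : ℕ := ∏ᶠ k, Nat.factorial (multN t r k)

/-- A path map is at least of order `r` if all iterated integrals of length `≤ r-1`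
vanish on it. -/
def atLeastOrder (K : Type*) [Field K] {V : Type*} (n : ℕ) (σ : ℕ → PStep V) (r : ℕ) : Prop :=
  ∀ l : ℕ, 1 ≤ l → l ≤ r - 1 → ∀ ω : Fin l → V → V → K, iint K n σ l ω = 0

set_option linter.dupNamespace false
namespace Proof18

open Finset PStep

variable {V : Type*} {K : Type*} [Field K]

open Finset PStep

variable {V : Type*} {K : Type*} [Field K]

/-- One-step kernel. -/
noncomputable def Es (ω : ℕ → V → V → K) (s : PStep V) (a b : ℕ) : K :=
  if a ≤ b then (∏ j ∈ Finset.Ico a b, PStep.pair (ω j) s) / (Nat.factorial (b - a) : K) else 0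

/-- Convolution of triangular kernels. -/
noncomputable def conv (f g : ℕ → ℕ → K) : ℕ → ℕ → K :=
  fun a b => ∑ c ∈ Finset.Icc a b, f a c * g c b

/-- Identity kernel. -/
def dd : ℕ → ℕ → K := fun a b => if a = b then (1 : K) else 0

/-- `P σ ω k a b` : iterated integral of `ω a ⋯ ω (b-1)` over the first `k` steps of `σ`. -/
noncomputable def P (σ : ℕ → PStep V) (ω : ℕ → V → V → K) : ℕ → ℕ → ℕ → K
  | 0 => dd
  | (k+1) => conv (P σ ω k) (Es ω (σ (k+1)))

def Supp (f : ℕ → ℕ → K) : Prop := ∀ a b, b < a → f a b = 0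

lemma supp_dd : Supp (dd (K := K)) := fun a b h => if_neg (by omega)

lemma supp_Es (ω : ℕ → V → V → K) (s : PStep V) : Supp (Es ω s) :=
  fun a b h => if_neg (by omega)

lemma supp_conv {f g : ℕ → ℕ → K} : Supp (conv f g) := by
  intro a b h
  have : Finset.Icc a b = ∅ := Finset.Icc_eq_empty (by omega)
  simp [conv, this]

lemma supp_P (σ : ℕ → PStep V) (ω : ℕ → V → V → K) (k : ℕ) : Supp (P σ ω k) := by
  cases k with
  | zero => exact supp_dd
  | succ k => exact supp_conv

lemma conv_dd_left {f : ℕ → ℕ → K} (hf : Supp f) : conv dd f = f := by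
  funext a b
  rcases le_or_gt a b with h | h
  · rw [conv, Finset.sum_eq_single a]
    · simp [dd]
    · intro c hc hne; simp only [Finset.mem_Icc] at hc
      simp [dd, Ne.symm hne]
    · intro hc; exact absurd (Finset.mem_Icc.mpr ⟨le_refl a, h⟩) hc
  · rw [supp_conv _ _ h, hf _ _ h]

lemma conv_dd_right {f : ℕ → ℕ → K} (hf : Supp f) : conv f dd = f := by
  funext a b
  rcases le_or_gt a b with h | h
  · rw [conv, Finset.sum_eq_single b]
    · simp [dd]
    · intro c hc hne; simp [dd, hne]
    · intro hc; exact absurd (Finset.mem_Icc.mpr ⟨h, le_refl b⟩) hc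
  · rw [supp_conv _ _ h, hf _ _ h]

lemma conv_assoc (f g h : ℕ → ℕ → K) : conv (conv f g) h = conv f (conv g h) := by
  funext a b
  simp only [conv, Finset.sum_mul, Finset.mul_sum]
  rw [Finset.sum_sigma', Finset.sum_sigma']
  refine Finset.sum_nbij' (fun x => ⟨x.2, x.1⟩) (fun x => ⟨x.2, x.1⟩) ?_ ?_ ?_ ?_ ?_ <;>
    simp only [Finset.mem_sigma, Finset.mem_Icc] <;>
    rintro ⟨x1, x2⟩ h <;> simp_all <;> try omega
  ring



variable {V : Type*} {K : Type*} [Field K]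

lemma Es_diag (ω : ℕ → V → V → K) (s : PStep V) (a : ℕ) : Es ω s a a = 1 := by
  simp [Es]

lemma P_diag (σ : ℕ → PStep V) (ω : ℕ → V → V → K) (k a : ℕ) : P σ ω k a a = 1 := by
  induction k with
  | zero => simp [P, dd]
  | succ k ih => simp [P, conv, ih, Es_diag]

lemma P_congr_steps {σ σ' : ℕ → PStep V} (ω : ℕ → V → V → K) (k : ℕ)
    (h : ∀ t, 1 ≤ t → t ≤ k → σ t = σ' t) : P σ ω k = P σ' ω k := by
  induction k with
  | zero => rfl
  | succ k ih =>
    show conv _ _ = conv _ _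
    rw [ih (fun t h1 h2 => h t h1 (by omega)), h (k+1) (by omega) le_rfl]

lemma Es_congr_forms {ω ω' : ℕ → V → V → K} (s : PStep V) {a b : ℕ}
    (h : ∀ j, a ≤ j → j < b → ω j = ω' j) : Es ω s a b = Es ω' s a b := by
  unfold Es
  rcases le_or_gt a b with hab | hab
  · rw [if_pos hab, if_pos hab]
    congr 1
    exact Finset.prod_congr rfl (fun j hj => by
      rw [Finset.mem_Ico] at hj; rw [h j hj.1 hj.2])
  · rw [if_neg (by omega), if_neg (by omega)]

lemma P_congr_forms (σ : ℕ → PStep V) {ω ω' : ℕ → V → V → K} (k : ℕ) {a b : ℕ}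
    (h : ∀ j, a ≤ j → j < b → ω j = ω' j) : P σ ω k a b = P σ ω' k a b := by
  induction k generalizing b with
  | zero => rfl
  | succ k ih =>
    show conv _ _ a b = conv _ _ a b
    unfold conv
    refine Finset.sum_congr rfl (fun c hc => ?_)
    rw [Finset.mem_Icc] at hc
    rw [ih (fun j h1 h2 => h j h1 (by omega)),
      Es_congr_forms _ (fun j h1 h2 => h j (by omega) h2)]

/-- `shift σ` drops the first step. -/
def shiftS (σ : ℕ → PStep V) : ℕ → PStep V := fun t => σ (t + 1)

lemma P_left_peel (σ : ℕ → PStep V) (ω : ℕ → V → V → K) (k : ℕ) :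
    P σ ω (k + 1) = conv (Es ω (σ 1)) (P (shiftS σ) ω k) := by
  induction k with
  | zero =>
    show conv dd _ = conv _ dd
    rw [conv_dd_left (supp_Es ω (σ 1)), conv_dd_right (supp_Es ω (σ 1))]
  | succ k ih =>
    show conv (P σ ω (k+1)) _ = _
    rw [ih, conv_assoc]
    rfl

lemma P_concat (σ τ : ℕ → PStep V) (ω : ℕ → V → V → K) (n m : ℕ) :
    P (concatP n σ τ) ω (n + m) = conv (P σ ω n) (P τ ω m) := by
  induction m with
  | zero =>
    rw [Nat.add_zero]
    rw [show (P τ ω 0) = dd from rfl, conv_dd_right (supp_P σ ω n)]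
    exact P_congr_steps ω n (fun t h1 h2 => by simp [concatP, h2])
  | succ m ih =>
    show conv (P (concatP n σ τ) ω (n + m)) (Es ω (concatP n σ τ (n + m + 1))) = _
    rw [ih, conv_assoc]
    have h1 : concatP n σ τ (n + m + 1) = τ (m + 1) := by
      simp only [concatP, if_neg (by omega : ¬ n + m + 1 ≤ n)]
      congr 1; omega
    rw [h1]
    rfl

lemma Es_translate (ω : ℕ → V → V → K) (s : PStep V) (a l l' : ℕ) :
    Es ω s (a + l) (a + l') = Es (fun j => ω (a + j)) s l l' := by
  unfold Es
  rcases le_or_gt l l' with h | h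
  · rw [if_pos (by omega), if_pos h]
    have : a + l' - (a + l) = l' - l := by omega
    rw [this]
    congr 1
    rw [show a + l = l + a by omega, show a + l' = l' + a by omega,
      ← Finset.prod_Ico_add (fun j => PStep.pair (ω j) s) l l' a]
  · rw [if_neg (by omega), if_neg (by omega)]

lemma P_translate (σ : ℕ → PStep V) (ω : ℕ → V → V → K) (k a l : ℕ) :
    P σ ω k a (a + l) = P σ (fun j => ω (a + j)) k 0 l := by
  induction k generalizing l with
  | zero =>
    show dd a (a + l) = dd 0 l
    simp only [dd]
    by_cases h : l = 0
    · subst h; simp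
    · rw [if_neg (by omega), if_neg (Ne.symm h)]
  | succ k ih =>
    show conv _ _ a (a+l) = conv _ _ 0 l
    unfold conv
    refine Finset.sum_nbij' (fun c => c - a) (fun c => a + c) ?_ ?_ ?_ ?_ ?_ <;>
      simp only [Finset.mem_Icc]
    · intro c hc; omega
    · intro c hc; omega
    · intro c hc; omega
    · intro c hc; omega
    · intro c hc
      have hc' : c = a + (c - a) := by omega
      have e1 : P σ ω k a c = P σ (fun j => ω (a + j)) k 0 (c - a) := by
        conv_lhs => rw [hc']
        exact ih (c - a)
      have e2 : Es ω (σ (k+1)) c (a + l) = Es (fun j => ω (a + j)) (σ (k+1)) (c - a) l := by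
        conv_lhs => rw [hc']
        exact Es_translate ω _ a (c-a) l
      rw [e1, e2]



variable {V : Type*} {K : Type*} [Field K]

lemma pair_inv (ω : V → V → K) (s : PStep V) : PStep.pair ω s.inv = - PStep.pair ω s := by
  cases s <;> simp [PStep.pair, PStep.inv]

lemma fact_ne_zero [CharZero K] (k : ℕ) : ((Nat.factorial k : ℕ) : K) ≠ 0 :=
  Nat.cast_ne_zero.mpr (Nat.factorial_ne_zero k)

lemma Es_inv (ω : ℕ → V → V → K) (s : PStep V) (a b : ℕ) :
    Es ω s.inv a b = (-1) ^ (b - a) * Es ω s a b := by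
  unfold Es
  rcases le_or_gt a b with h | h
  · rw [if_pos h, if_pos h, ← mul_div_assoc]
    congr 1
    simp only [pair_inv]
    rw [show (fun j => -PStep.pair (ω j) s) = fun j => (-1) * PStep.pair (ω j) s from
      funext fun j => (neg_one_mul _).symm,
      Finset.prod_mul_distrib, Finset.prod_const, Nat.card_Ico]
  · rw [if_neg (by omega), if_neg (by omega), mul_zero]

lemma alt_sum_zero [CharZero K] {L : ℕ} (hL : 1 ≤ L) :
    ∑ i ∈ Finset.range (L + 1), (-1 : K) ^ (L - i) / ((Nat.factorial i : K) * (Nat.factorial (L - i) : K)) = 0 := by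
  have key : ∑ i ∈ Finset.range (L + 1), (-1 : K) ^ (L - i) * (Nat.choose L i : K) = 0 := by
    have h2 : ∀ i ∈ Finset.range (L + 1), (-1 : K) ^ (L - i) * (Nat.choose L i : K)
        = (-1 : K) ^ L * ((-1 : K) ^ i * (Nat.choose L i : K)) := by
      intro i hi
      rw [Finset.mem_range] at hi
      rw [← mul_assoc, ← pow_add, show L + i = (L - i) + 2 * i by omega, pow_add, pow_mul]
      simp
    rw [Finset.sum_congr rfl h2, ← Finset.mul_sum]
    have := Int.alternating_sum_range_choose (n := L)
    rw [if_neg (by omega)] at this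
    have cast : ((∑ i ∈ Finset.range (L + 1), (-1 : ℤ) ^ i * (Nat.choose L i : ℤ) : ℤ) : K) = 0 := by
      rw [this]; simp
    push_cast at cast
    rw [cast, mul_zero]
  have hfac : ∀ i ∈ Finset.range (L + 1),
      (-1 : K) ^ (L - i) / ((Nat.factorial i : K) * (Nat.factorial (L - i) : K))
      = ((-1 : K) ^ (L - i) * (Nat.choose L i : K)) / (Nat.factorial L : K) := by
    intro i hi
    rw [Finset.mem_range] at hi
    have hi' : i ≤ L := by omega
    have hcf : ((Nat.choose L i * (Nat.factorial i * Nat.factorial (L - i)) : ℕ) : K) = (Nat.factorial L : K) := by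
      rw [← Nat.choose_mul_factorial_mul_factorial hi', mul_assoc]
    rw [div_eq_div_iff (mul_ne_zero (fact_ne_zero i) (fact_ne_zero (L - i))) (fact_ne_zero L)]
    push_cast at hcf ⊢
    rw [← hcf]
    ring
  rw [Finset.sum_congr rfl hfac, ← Finset.sum_div, key, zero_div]

lemma Es_conv_inv [CharZero K] (ω : ℕ → V → V → K) (s : PStep V) :
    conv (Es ω s) (Es ω s.inv) = dd := by
  funext a b
  rcases lt_trichotomy a b with h | h | h
  case inr.inl => subst h; simp [conv, Es_diag, dd]
  case inr.inr => rw [supp_conv _ _ h, dd, if_neg (by omega)]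
  unfold conv
  have hterm : ∀ c ∈ Finset.Icc a b,
      Es ω s a c * Es ω s.inv c b
      = (∏ j ∈ Finset.Ico a b, PStep.pair (ω j) s) *
        ((-1 : K) ^ (b - c) / ((Nat.factorial (c - a) : K) * (Nat.factorial (b - c) : K))) := by
    intro c hc
    rw [Finset.mem_Icc] at hc
    rw [Es_inv]
    unfold Es
    rw [if_pos hc.1, if_pos hc.2]
    rw [← Finset.prod_Ico_consecutive _ hc.1 hc.2]
    field_simp
  rw [Finset.sum_congr rfl hterm, ← Finset.mul_sum]
  have hz : ∑ c ∈ Finset.Icc a b, (-1 : K) ^ (b - c) / ((Nat.factorial (c - a) : K) * (Nat.factorial (b - c) : K)) = 0 := by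
    have hre : ∑ c ∈ Finset.Icc a b, (-1 : K) ^ (b - c) / ((Nat.factorial (c - a) : K) * (Nat.factorial (b - c) : K))
        = ∑ i ∈ Finset.range ((b - a) + 1), (-1 : K) ^ ((b - a) - i) / ((Nat.factorial i : K) * (Nat.factorial ((b - a) - i) : K)) := by
      refine Finset.sum_nbij' (fun c => c - a) (fun i => a + i) ?_ ?_ ?_ ?_ ?_
      · intro c hc; simp only [Finset.mem_Icc] at hc; simp only [Finset.mem_range]; omega
      · intro i hi; simp only [Finset.mem_range] at hi; simp only [Finset.mem_Icc]; omega
      · intro c hc; simp only [Finset.mem_Icc] at hc; omega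
      · intro i hi; simp only [Finset.mem_range] at hi; omega
      · intro c hc; simp only [Finset.mem_Icc] at hc
        rw [show b - a - (c - a) = b - c by omega]
    rw [hre]
    exact alt_sum_zero (by omega)
  rw [hz, mul_zero, dd, if_neg (by omega)]

lemma Es_inv_conv [CharZero K] (ω : ℕ → V → V → K) (s : PStep V) :
    conv (Es ω s.inv) (Es ω s) = dd := by
  have h := Es_conv_inv ω s.inv
  have hinv : s.inv.inv = s := by cases s <;> rfl
  rwa [hinv] at h

lemma shift_invP (σ : ℕ → PStep V) (n : ℕ) :
    shiftS (invP (n + 1) σ) = invP n σ := by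
  funext t
  simp only [shiftS, invP]
  congr 2
  omega

lemma invP_one (σ : ℕ → PStep V) (n : ℕ) : invP (n + 1) σ 1 = (σ (n + 1)).inv := by
  simp [invP]

lemma P_inv_conv [CharZero K] (σ : ℕ → PStep V) (ω : ℕ → V → V → K) (n : ℕ) :
    conv (P σ ω n) (P (invP n σ) ω n) = dd ∧
    conv (P (invP n σ) ω n) (P σ ω n) = dd := by
  induction n with
  | zero =>
    constructor <;> exact conv_dd_left supp_dd
  | succ n ih =>
    have hA' : P (invP (n + 1) σ) ω (n + 1)
        = conv (Es ω (σ (n + 1)).inv) (P (invP n σ) ω n) := by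
      rw [P_left_peel, invP_one, shift_invP]
    have hA : P σ ω (n + 1) = conv (P σ ω n) (Es ω (σ (n + 1))) := rfl
    constructor
    · rw [hA, hA', conv_assoc, ← conv_assoc (Es ω (σ (n+1))), Es_conv_inv,
        conv_dd_left (supp_P _ _ _), ih.1]
    · rw [hA, hA', conv_assoc, ← conv_assoc (P (invP n σ) ω n), ih.2,
        conv_dd_left (supp_Es _ _), Es_inv_conv]



variable {V : Type*} {K : Type*} [Field K]

/-- `Van f p`: `f` vanishes on intervals of length `< p`. -/
def Van (f : ℕ → ℕ → K) (p : ℕ) : Prop := ∀ a b, b - a < p → f a b = 0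

/-- defect kernel -/
def km (A : ℕ → ℕ → K) : ℕ → ℕ → K := fun a b => A a b - dd a b

lemma supp_km {A : ℕ → ℕ → K} (hA : Supp A) : Supp (km A) := by
  intro a b h
  simp [km, hA a b h, supp_dd a b h]

lemma van_km {A : ℕ → ℕ → K} {p : ℕ}
    (hdiag : ∀ a, A a a = 1) (hsupp : Supp A)
    (h0 : ∀ a b, 1 ≤ b - a → b - a ≤ p - 1 → A a b = 0) : Van (km A) p := by
  intro a b h
  rcases lt_trichotomy a b with hab | hab | hab
  · have h1 : 1 ≤ b - a := by omega
    simp only [km, h0 a b h1 (by omega), dd, if_neg (show ¬ a = b by omega)]; ring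
  · subst hab; simp [km, hdiag, dd]
  · simp only [km, hsupp a b hab, dd, if_neg (show ¬ a = b by omega)]; ring

lemma van_conv {f g : ℕ → ℕ → K} {p q : ℕ} (hf : Van f p) (hg : Van g q)
    (hp : 1 ≤ p) (hq : 1 ≤ q) : Van (conv f g) (p + q) := by
  intro a b h
  rw [conv]
  refine Finset.sum_eq_zero (fun c hc => ?_)
  rw [Finset.mem_Icc] at hc
  by_cases h1 : c - a < p
  · rw [hf a c h1, zero_mul]
  · rw [hg c b (by omega), mul_zero]

lemma conv_at {f g : ℕ → ℕ → K} {p q : ℕ} (hf : Van f p) (hg : Van g q)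
    (hp : 1 ≤ p) (hq : 1 ≤ q) {a b : ℕ} (hab : b - a = p + q) :
    conv f g a b = f a (a + p) * g (a + p) b := by
  have hb : a < b := by omega
  rw [conv]
  rw [Finset.sum_eq_single (a + p)]
  · intro c hc hne
    rw [Finset.mem_Icc] at hc
    by_cases h1 : c - a < p
    · rw [hf a c h1, zero_mul]
    · rw [hg c b (by omega), mul_zero]
  · intro hc
    exact absurd (Finset.mem_Icc.mpr ⟨by omega, by omega⟩) hc

lemma conv_expand2 (f1 f2 g1 g2 : ℕ → ℕ → K) (a b : ℕ) :
    conv (fun a b => f1 a b + f2 a b) (fun a b => g1 a b + g2 a b) a b =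
    conv f1 g1 a b + conv f1 g2 a b + conv f2 g1 a b + conv f2 g2 a b := by
  simp only [conv, ← Finset.sum_add_distrib]
  exact Finset.sum_congr rfl (fun c _ => by ring)

lemma conv_expand3 (f1 f2 f3 g1 g2 g3 : ℕ → ℕ → K) (a b : ℕ) :
    conv (fun a b => f1 a b + f2 a b + f3 a b) (fun a b => g1 a b + g2 a b + g3 a b) a b =
    conv f1 g1 a b + conv f1 g2 a b + conv f1 g3 a b +
    conv f2 g1 a b + conv f2 g2 a b + conv f2 g3 a b +
    conv f3 g1 a b + conv f3 g2 a b + conv f3 g3 a b := by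
  simp only [conv, ← Finset.sum_add_distrib]
  exact Finset.sum_congr rfl (fun c _ => by ring)

lemma km_decomp (A : ℕ → ℕ → K) : A = fun a b => dd a b + km A a b := by
  funext a b; simp [km]

lemma conv_decomp {A B : ℕ → ℕ → K} (hA : Supp A) (hB : Supp B) (a b : ℕ) :
    conv A B a b = dd a b + (km A a b + km B a b + conv (km A) (km B) a b) := by
  conv_lhs => rw [km_decomp A, km_decomp B]
  rw [conv_expand2]
  rw [show conv dd dd = (dd : ℕ → ℕ → K) from conv_dd_left supp_dd,
    show conv dd (km B) = km B from conv_dd_left (supp_km hB),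
    show conv (km A) dd = km A from conv_dd_right (supp_km hA)]
  ring

lemma km_conv_inv {A A' : ℕ → ℕ → K} (hA : Supp A) (hA' : Supp A')
    (hinv : conv A A' = dd) (a b : ℕ) :
    conv (km A) (km A') a b = - km A a b - km A' a b := by
  have h := conv_decomp hA hA' a b
  rw [hinv] at h
  linear_combination -h

/-- The main abstract computation. -/
lemma commutator_kernel {A B A' B' : ℕ → ℕ → K} {r s : ℕ} (hr : 1 ≤ r) (hs : 1 ≤ s)
    (hAs : Supp A) (hBs : Supp B) (hA's : Supp A') (hB's : Supp B')
    (hAv : Van (km A) r) (hBv : Van (km B) s) (hA'v : Van (km A') r) (hB'v : Van (km B') s)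
    (hA'neg : ∀ a b, 1 ≤ b - a → b - a ≤ 2 * r - 1 → A' a b = - A a b)
    (hB'neg : ∀ a b, 1 ≤ b - a → b - a ≤ 2 * s - 1 → B' a b = - B a b)
    (hAA' : conv A A' = dd) (hBB' : conv B B' = dd)
    (a b : ℕ) (hab : 1 ≤ b - a) (hab2 : b - a ≤ r + s) :
    conv (conv (conv A B) A') B' a b =
      (if b - a = r + s then A a (a + r) * B (a + r) b - B a (a + s) * A (a + s) b else 0) := by
  rw [conv_assoc]
  have hX : conv A B = fun a b => dd a b + (km A a b + km B a b + conv (km A) (km B) a b) :=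
    funext fun a => funext fun b => conv_decomp hAs hBs a b
  have hY : conv A' B' = fun a b => dd a b + (km A' a b + km B' a b + conv (km A') (km B') a b) :=
    funext fun a => funext fun b => conv_decomp hA's hB's a b
  rw [hX, hY, conv_expand2]
  have sP1 : Supp (fun a b => km A a b + km B a b + conv (km A) (km B) a b : ℕ → ℕ → K) := by
    intro a' b' h
    simp [supp_km hAs a' b' h, supp_km hBs a' b' h, supp_conv (f := km A) (g := km B) a' b' h]
  have sP2 : Supp (fun a b => km A' a b + km B' a b + conv (km A') (km B') a b : ℕ → ℕ → K) := by
    intro a' b' h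
    simp [supp_km hA's a' b' h, supp_km hB's a' b' h, supp_conv (f := km A') (g := km B') a' b' h]
  rw [show conv dd dd = (dd : ℕ → ℕ → K) from conv_dd_left supp_dd,
    conv_dd_left sP2, conv_dd_right sP1, conv_expand3]
  -- kill the five high-order terms
  have hvAB : Van (conv (km A) (km B)) (r + s) := van_conv hAv hBv hr hs
  have hvA'B' : Van (conv (km A') (km B')) (r + s) := van_conv hA'v hB'v hr hs
  have z1 : conv (km A) (conv (km A') (km B')) a b = 0 :=
    van_conv hAv hvA'B' hr (by omega) a b (by omega)
  have z2 : conv (km B) (conv (km A') (km B')) a b = 0 :=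
    van_conv hBv hvA'B' hs (by omega) a b (by omega)
  have z3 : conv (conv (km A) (km B)) (km A') a b = 0 :=
    van_conv hvAB hA'v (by omega) hr a b (by omega)
  have z4 : conv (conv (km A) (km B)) (km B') a b = 0 :=
    van_conv hvAB hB'v (by omega) hs a b (by omega)
  have z5 : conv (conv (km A) (km B)) (conv (km A') (km B')) a b = 0 :=
    van_conv hvAB hvA'B' (by omega) (by omega) a b (by omega)
  rw [z1, z2, z3, z4, z5]
  dsimp only
  rw [km_conv_inv hAs hA's hAA' a b, km_conv_inv hBs hB's hBB' a b]
  have hdd : dd a b = (0 : K) := if_neg (by omega)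
  rcases eq_or_lt_of_le hab2 with heq | hlt
  · -- b - a = r + s
    rw [if_pos heq]
    have hb : b = a + (r + s) := by omega
    have e1 : conv (km A) (km B) a b = km A a (a + r) * km B (a + r) b :=
      conv_at hAv hBv hr hs heq
    have e2 : conv (km A) (km B') a b = km A a (a + r) * km B' (a + r) b :=
      conv_at hAv hB'v hr hs heq
    have e3 : conv (km B) (km A') a b = km B a (a + s) * km A' (a + s) b :=
      conv_at hBv hA'v hs hr (by omega)
    have e4 : conv (km A') (km B') a b = km A' a (a + r) * km B' (a + r) b :=
      conv_at hA'v hB'v hr hs heq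
    rw [e1, e2, e3, e4]
    have kA : km A a (a + r) = A a (a + r) := by
      simp only [km, dd, if_neg (show ¬ a = a + r by omega)]; ring
    have kA' : km A' a (a + r) = - A a (a + r) := by
      simp only [km, dd, if_neg (by omega : ¬ a = a + r)]
      rw [hA'neg a (a + r) (by omega) (by omega)]
      ring
    have kB : km B (a + r) b = B (a + r) b := by
      simp only [km, dd, if_neg (show ¬ a + r = b by omega)]; ring
    have kB' : km B' (a + r) b = - B (a + r) b := by
      simp only [km, dd, if_neg (by omega : ¬ a + r = b)]
      rw [hB'neg (a + r) b (by omega) (by omega)]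
      ring
    have kB2 : km B a (a + s) = B a (a + s) := by
      simp only [km, dd, if_neg (show ¬ a = a + s by omega)]; ring
    have kA2 : km A' (a + s) b = - A (a + s) b := by
      simp only [km, dd, if_neg (by omega : ¬ a + s = b)]
      rw [hA'neg (a + s) b (by omega) (by omega)]
      ring
    rw [kA, kA', kB, kB', kB2, kA2, hdd]
    ring
  · -- b - a < r + s : everything of order ≥ r+s dies
    rw [if_neg (by omega)]
    have w1 : conv (km A) (km B) a b = 0 := hvAB a b hlt
    have w2 : conv (km A) (km B') a b = 0 := van_conv hAv hB'v hr hs a b hlt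
    have w3 : conv (km B) (km A') a b = 0 := van_conv hBv hA'v hs hr a b (by omega)
    have w4 : conv (km A') (km B') a b = 0 := hvA'B' a b hlt
    rw [w1, w2, w3, w4, hdd]
    ring



open Finset

variable {V : Type*} {K : Type*} [Field K]

lemma card_filter_val_lt (r c : ℕ) (hc : c ≤ r) :
    ((Finset.univ : Finset (Fin r)).filter (fun i : Fin r => (i : ℕ) < c)).card = c := by
  have h : ((Finset.univ : Finset (Fin r)).filter (fun i : Fin r => (i : ℕ) < c))
      = (Finset.univ : Finset (Fin c)).image (Fin.castLE hc) := by
    ext i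
    simp only [Finset.mem_filter, Finset.mem_univ, true_and, Finset.mem_image]
    constructor
    · intro h; exact ⟨⟨(i : ℕ), h⟩, by ext1; rfl⟩
    · rintro ⟨j, rfl⟩; exact j.isLt
  rw [h, Finset.card_image_of_injective _ (Fin.castLE_injective hc), Finset.card_univ,
    Fintype.card_fin]

/-- For a monotone `f` into `Fin (n+1)` whose number of values `< n` is `c`,
the values `< n` occur exactly at indices `< c`. -/
lemma mono_cval_iff {n r c : ℕ} {f : Fin r → Fin (n + 1)} (hf : Monotone f)
    (hc : ((Finset.univ : Finset (Fin r)).filter (fun i => (f i : ℕ) < n)).card = c)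
    (i : Fin r) : (f i : ℕ) < n ↔ (i : ℕ) < c := by
  constructor
  · intro h
    have hsub : (Finset.univ : Finset (Fin r)).filter (fun j : Fin r => (j : ℕ) ≤ (i : ℕ))
        ⊆ (Finset.univ : Finset (Fin r)).filter (fun j => (f j : ℕ) < n) := by
      intro j hj
      rw [Finset.mem_filter] at hj ⊢
      refine ⟨Finset.mem_univ _, ?_⟩
      have : f j ≤ f i := hf (by exact Fin.le_def.mpr hj.2)
      omega
    have hcard := Finset.card_le_card hsub
    rw [hc] at hcard
    have : ((Finset.univ : Finset (Fin r)).filter (fun j : Fin r => (j : ℕ) ≤ (i : ℕ))).card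
        = (i : ℕ) + 1 := by
      have he : ((Finset.univ : Finset (Fin r)).filter (fun j : Fin r => (j : ℕ) ≤ (i : ℕ)))
          = ((Finset.univ : Finset (Fin r)).filter (fun j : Fin r => (j : ℕ) < (i : ℕ) + 1)) := by
        apply Finset.filter_congr; intro j _; simp
      rw [he, card_filter_val_lt r ((i : ℕ) + 1) (by omega)]
    omega
  · intro h
    by_contra hn
    have hsub : (Finset.univ : Finset (Fin r)).filter (fun j => (f j : ℕ) < n)
        ⊆ (Finset.univ : Finset (Fin r)).filter (fun j : Fin r => (j : ℕ) < (i : ℕ)) := by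
      intro j hj
      rw [Finset.mem_filter] at hj ⊢
      refine ⟨Finset.mem_univ _, ?_⟩
      by_contra hji
      have : f i ≤ f j := hf (Fin.le_def.mpr (by omega))
      omega
    have hcard := Finset.card_le_card hsub
    rw [hc, card_filter_val_lt r (i : ℕ) (le_of_lt i.isLt)] at hcard
    omega

/-- volFin as a product over `range N`. -/
lemma volFin_eq_prod_range {r N : ℕ} (v : Fin r → ℕ) (hv : ∀ i, v i < N) :
    volFin v = ∏ k ∈ Finset.range N,
      Nat.factorial ((Finset.univ.filter (fun j => v j = k)).card) := by
  rw [volFin]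
  refine Finset.prod_subset ?_ ?_
  · intro k hk
    rw [Finset.mem_image] at hk
    obtain ⟨i, _, rfl⟩ := hk
    exact Finset.mem_range.mpr (hv i)
  · intro k _ hk
    have : (Finset.univ.filter (fun j => v j = k)) = ∅ := by
      rw [Finset.filter_eq_empty_iff]
      intro j _
      intro hj
      exact hk (Finset.mem_image.mpr ⟨j, Finset.mem_univ _, hj⟩)
    rw [this]
    rfl



open Finset

variable {V : Type*} {K : Type*} [Field K]

/-- Extension of `g : Fin c → Fin n` to a monotone map `Fin r → Fin (n+1)`
sending everything from `c` on to `n`. -/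
def fext {n c r : ℕ} (hc : c ≤ r) (g : Fin c → Fin n) : Fin r → Fin (n + 1) :=
  fun i => if h : (i : ℕ) < c then Fin.castSucc (g ⟨i, h⟩) else Fin.last n

lemma fext_mono {n c r : ℕ} (hc : c ≤ r) {g : Fin c → Fin n} (hg : Monotone g) :
    Monotone (fext hc g) := by
  intro i j hij
  unfold fext
  by_cases hi : (i : ℕ) < c
  · by_cases hj : (j : ℕ) < c
    · rw [dif_pos hi, dif_pos hj]
      exact Fin.castSucc_le_castSucc_iff.mpr (hg (by exact Fin.le_def.mpr (Fin.le_def.mp hij)))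
    · rw [dif_pos hi, dif_neg hj]
      exact Fin.le_last _
  · have hj : ¬ (j : ℕ) < c := by
      have := Fin.le_def.mp hij; omega
    rw [dif_neg hi, dif_neg hj]

lemma fext_cval {n c r : ℕ} (hc : c ≤ r) (g : Fin c → Fin n) :
    ((Finset.univ : Finset (Fin r)).filter (fun i => (fext hc g i : ℕ) < n)).card = c := by
  have he : ((Finset.univ : Finset (Fin r)).filter (fun i => (fext hc g i : ℕ) < n))
      = ((Finset.univ : Finset (Fin r)).filter (fun i : Fin r => (i : ℕ) < c)) := by
    apply Finset.filter_congr
    intro i _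
    unfold fext
    by_cases hi : (i : ℕ) < c
    · simp only [dif_pos hi, Fin.coe_castSucc]
      simp [hi, (g ⟨i, hi⟩).isLt]
    · simp only [dif_neg hi, Fin.val_last]
      simp [hi]
  rw [he, card_filter_val_lt r c hc]

lemma fext_prod {n c r : ℕ} (hc : c ≤ r) (g : Fin c → Fin n) (ω : ℕ → V → V → K)
    (σ : ℕ → PStep V) :
    (∏ i : Fin r, PStep.pair (ω (i : ℕ)) (σ ((fext hc g i : ℕ) + 1)))
    = (∏ i : Fin c, PStep.pair (ω (i : ℕ)) (σ ((g i : ℕ) + 1)))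
      * ∏ j ∈ Finset.Ico c r, PStep.pair (ω j) (σ (n + 1)) := by
  set F : ℕ → K := fun t =>
    if h : t < r then PStep.pair (ω t) (σ ((fext hc g ⟨t, h⟩ : ℕ) + 1)) else 1 with hF
  have h1 : (∏ i : Fin r, PStep.pair (ω (i : ℕ)) (σ ((fext hc g i : ℕ) + 1))) = ∏ i : Fin r, F (i : ℕ) := by
    refine Finset.prod_congr rfl (fun i _ => ?_)
    rw [hF]
    dsimp only
    rw [dif_pos i.isLt]
  rw [h1, Fin.prod_univ_eq_prod_range F r, Finset.range_eq_Ico,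
    ← Finset.prod_Ico_consecutive F (Nat.zero_le c) hc]
  congr 1
  · rw [← Finset.range_eq_Ico, ← Fin.prod_univ_eq_prod_range F c]
    refine Finset.prod_congr rfl (fun i _ => ?_)
    rw [hF]
    dsimp only
    rw [dif_pos (lt_of_lt_of_le i.isLt hc)]
    unfold fext
    rw [dif_pos i.isLt]
    rfl
  · refine Finset.prod_congr rfl (fun j hj => ?_)
    rw [Finset.mem_Ico] at hj
    rw [hF]
    dsimp only
    rw [dif_pos hj.2]
    rw [show fext hc g ⟨j, hj.2⟩ = Fin.last n from dif_neg (by omega : ¬ j < c)]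
    rfl

lemma fext_card_fiber_lt {n c r : ℕ} (hc : c ≤ r) (g : Fin c → Fin n) {k : ℕ} (hk : k < n) :
    ((Finset.univ : Finset (Fin r)).filter (fun i => (fext hc g i : ℕ) = k)).card
    = ((Finset.univ : Finset (Fin c)).filter (fun j => (g j : ℕ) = k)).card := by
  refine Finset.card_bij' (i := fun a ha => (⟨(a : ℕ), ?_⟩ : Fin c))
    (j := fun b hb => (⟨(b : ℕ), lt_of_lt_of_le b.isLt hc⟩ : Fin r)) ?_ ?_ ?_ ?_
  · rw [Finset.mem_filter] at ha
    by_contra hac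
    have : (fext hc g a : ℕ) = n := by
      unfold fext; rw [dif_neg hac]; rfl
    omega
  · intro a ha
    rw [Finset.mem_filter] at ha ⊢
    refine ⟨Finset.mem_univ _, ?_⟩
    have h2 := ha.2
    unfold fext at h2
    by_cases hac : (a : ℕ) < c
    · rw [dif_pos hac] at h2
      exact h2
    · rw [dif_neg hac] at h2
      simp only [Fin.val_last] at h2
      omega
  · intro b hb
    rw [Finset.mem_filter] at hb ⊢
    refine ⟨Finset.mem_univ _, ?_⟩
    unfold fext
    rw [dif_pos (show ((⟨(b : ℕ), lt_of_lt_of_le b.isLt hc⟩ : Fin r) : ℕ) < c from b.isLt)]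
    simpa using hb.2
  · intro a ha; ext1; rfl
  · intro b hb; ext1; rfl

lemma fext_card_fiber_top {n c r : ℕ} (hc : c ≤ r) (g : Fin c → Fin n) :
    ((Finset.univ : Finset (Fin r)).filter (fun i => (fext hc g i : ℕ) = n)).card = r - c := by
  have he : ((Finset.univ : Finset (Fin r)).filter (fun i => (fext hc g i : ℕ) = n))
      = ((Finset.univ : Finset (Fin r)).filter (fun i : Fin r => ¬ (i : ℕ) < c)) := by
    apply Finset.filter_congr
    intro i _
    unfold fext
    by_cases hi : (i : ℕ) < c
    · have hlt := (g ⟨i, hi⟩).isLt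
      rw [dif_pos hi, Fin.coe_castSucc]
      constructor <;> intro h' <;> omega
    · simp only [dif_neg hi, Fin.val_last]
      simp [hi]
  rw [he, Finset.filter_not, Finset.card_sdiff_of_subset (Finset.filter_subset _ _),
    card_filter_val_lt r c hc, Finset.card_univ, Fintype.card_fin]

lemma fext_volFin {n c r : ℕ} (hc : c ≤ r) (g : Fin c → Fin n) :
    volFin (fun i => (fext hc g i : ℕ))
    = volFin (fun j => (g j : ℕ)) * Nat.factorial (r - c) := by
  rw [volFin_eq_prod_range (fun i => (fext hc g i : ℕ)) (N := n + 1) (fun i => (fext hc g i).isLt),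
    volFin_eq_prod_range (fun j => (g j : ℕ)) (N := n + 1) (fun j => lt_trans (g j).isLt (Nat.lt_succ_self n)),
    Finset.prod_range_succ, Finset.prod_range_succ]
  have htop : ((Finset.univ : Finset (Fin c)).filter (fun j => (g j : ℕ) = n)).card = 0 := by
    rw [Finset.card_eq_zero, Finset.filter_eq_empty_iff]
    intro j _
    have := (g j).isLt
    omega
  rw [htop, fext_card_fiber_top hc g]
  have hmain : ∀ k ∈ Finset.range n,
      Nat.factorial ((Finset.univ.filter (fun i : Fin r => (fext hc g i : ℕ) = k)).card)
      = Nat.factorial ((Finset.univ.filter (fun j : Fin c => (g j : ℕ) = k)).card) := by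
    intro k hk
    rw [Finset.mem_range] at hk
    rw [fext_card_fiber_lt hc g hk]
  rw [Finset.prod_congr rfl hmain]
  simp [Nat.factorial]



open Finset

variable {V : Type*} {K : Type*} [Field K]

lemma inner_sum (σ : ℕ → PStep V) (ω : ℕ → V → V → K) (n r c : ℕ) (hc : c ≤ r) :
    ∑ f ∈ (Finset.univ : Finset (Fin r → Fin (n + 1))).filter
        (fun f : Fin r → Fin (n + 1) => Monotone f ∧
          ((Finset.univ : Finset (Fin r)).filter (fun i => (f i : ℕ) < n)).card = c),
      (∏ i : Fin r, PStep.pair (ω (i : ℕ)) (σ ((f i : ℕ) + 1)))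
        / (volFin (fun i => (f i : ℕ)) : K)
    = (∑ g ∈ (Finset.univ : Finset (Fin c → Fin n)).filter (fun g : Fin c → Fin n => Monotone g),
        (∏ i : Fin c, PStep.pair (ω (i : ℕ)) (σ ((g i : ℕ) + 1)))
          / (volFin (fun i => (g i : ℕ)) : K))
      * Es ω (σ (n + 1)) c r := by
  rw [Finset.sum_mul]
  symm
  refine Finset.sum_bij' (i := fun g _ => fext hc g)
    (j := fun f hf => fun jj : Fin c =>
      (⟨(f ⟨(jj : ℕ), lt_of_lt_of_le jj.isLt hc⟩ : ℕ),
        ((mono_cval_iff (Finset.mem_filter.mp hf).2.1 (Finset.mem_filter.mp hf).2.2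
          ⟨(jj : ℕ), lt_of_lt_of_le jj.isLt hc⟩).mpr jj.isLt)⟩ : Fin n))
    ?_ ?_ ?_ ?_ ?_
  · intro g hg
    rw [Finset.mem_filter] at hg ⊢
    exact ⟨Finset.mem_univ _, fext_mono hc hg.2, fext_cval hc g⟩
  · intro f hf
    rw [Finset.mem_filter] at hf ⊢
    refine ⟨Finset.mem_univ _, ?_⟩
    intro j1 j2 hj
    have := hf.2.1 (show (⟨(j1 : ℕ), lt_of_lt_of_le j1.isLt hc⟩ : Fin r)
        ≤ ⟨(j2 : ℕ), lt_of_lt_of_le j2.isLt hc⟩ from Fin.le_def.mpr (Fin.le_def.mp hj))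
    exact Fin.le_def.mpr (Fin.le_def.mp this)
  · -- left inverse : recover g
    intro g hg
    funext jj
    ext1
    show (fext hc g ⟨(jj : ℕ), _⟩ : ℕ) = (g jj : ℕ)
    unfold fext
    rw [dif_pos (show ((⟨(jj : ℕ), lt_of_lt_of_le jj.isLt hc⟩ : Fin r) : ℕ) < c from jj.isLt)]
    rfl
  · -- right inverse : recover f
    intro f hf
    have hf' := Finset.mem_filter.mp hf
    funext i
    unfold fext
    dsimp only
    by_cases hi : (i : ℕ) < c
    · rw [dif_pos hi]
      ext1
      exact rfl
    · rw [dif_neg hi]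
      have hni : ¬ ((f i : ℕ) < n) := by
        intro hlt
        exact hi ((mono_cval_iff hf'.2.1 hf'.2.2 i).mp hlt)
      have : (f i : ℕ) = n := by
        have := (f i).isLt
        omega
      exact (Fin.ext this.symm : Fin.last n = f i).symm ▸ rfl
  · -- value identity
    intro g hg
    rw [fext_prod hc g ω σ, fext_volFin hc g]
    rw [Es, if_pos hc]
    push_cast
    rw [div_mul_div_comm]



open Finset

variable {V : Type*} {K : Type*} [Field K]

lemma iint_restrict_eq_P (σ : ℕ → PStep V) (ω : ℕ → V → V → K) (n r : ℕ) :
    iint K n σ r (fun i => ω (i : ℕ)) = P σ ω n 0 r := by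
  induction n generalizing r with
  | zero =>
    cases r with
    | zero =>
      rw [iint]
      rw [show P σ ω 0 0 0 = 1 from P_diag σ ω 0 0]
      have h1 : (Finset.univ : Finset (Fin 0 → Fin 0)).filter (fun f => Monotone f)
          = Finset.univ := Finset.filter_true_of_mem (fun f _ => fun a => a.elim0)
      rw [h1]
      have h2 : volFin (fun i : Fin 0 => ((default : Fin 0 → Fin 0) i : ℕ)) = 1 := by
        rw [volFin]
        simp
      rw [Finset.sum_eq_single (default : Fin 0 → Fin 0)]
      · rw [h2]
        simp
      · intro f _ hne
        exact absurd (Subsingleton.elim f default) hne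
      · intro h; exact absurd (Finset.mem_univ _) h
    | succ r' =>
      rw [iint]
      have : (Finset.univ : Finset (Fin (r' + 1) → Fin 0)) = ∅ := by
        apply Finset.univ_eq_empty
      rw [this, Finset.filter_empty, Finset.sum_empty]
      show (0 : K) = dd 0 (r' + 1)
      rw [dd, if_neg (by omega)]
  | succ n ih =>
    rw [iint]
    have hmaps : ∀ f ∈ (Finset.univ : Finset (Fin r → Fin (n + 1))).filter
        (fun f : Fin r → Fin (n + 1) => Monotone f),
        ((Finset.univ : Finset (Fin r)).filter (fun i => (f i : ℕ) < n)).card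
          ∈ Finset.range (r + 1) := by
      intro f _
      rw [Finset.mem_range]
      have := Finset.card_filter_le (Finset.univ : Finset (Fin r))
        (fun i => (f i : ℕ) < n)
      rw [Finset.card_univ, Fintype.card_fin] at this
      omega
    rw [← Finset.sum_fiberwise_of_maps_to hmaps]
    have hstep : ∀ c ∈ Finset.range (r + 1),
        ∑ f ∈ ((Finset.univ : Finset (Fin r → Fin (n + 1))).filter
            (fun f : Fin r → Fin (n + 1) => Monotone f)).filter
          (fun f => ((Finset.univ : Finset (Fin r)).filter (fun i => (f i : ℕ) < n)).card = c),
          (∏ i : Fin r, PStep.pair (ω (i : ℕ)) (σ ((f i : ℕ) + 1)))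
            / (volFin (fun i => (f i : ℕ)) : K)
        = P σ ω n 0 c * Es ω (σ (n + 1)) c r := by
      intro c hcm
      rw [Finset.mem_range] at hcm
      have hc : c ≤ r := by omega
      rw [Finset.filter_filter]
      rw [inner_sum σ ω n r c hc]
      congr 1
      rw [← ih c]
      rw [iint]
    rw [Finset.sum_congr rfl hstep]
    show _ = conv (P σ ω n) (Es ω (σ (n + 1))) 0 r
    rw [conv]
    rw [show Finset.Icc 0 r = Finset.range (r + 1) by
      rw [Finset.range_eq_Ico, Nat.Ico_zero_eq_range]
      rw [← Finset.Ico_add_one_right_eq_Icc, Finset.range_eq_Ico]]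

lemma iint_eq_P (σ : ℕ → PStep V) (n r : ℕ) (ω' : Fin r → V → V → K) :
    iint K n σ r ω' = P σ (fun j => if h : j < r then ω' ⟨j, h⟩ else fun _ _ => 0) n 0 r := by
  rw [← iint_restrict_eq_P]
  congr 1
  funext i
  rw [dif_pos i.isLt]

lemma P_vanish {n r : ℕ} {σ : ℕ → PStep V} (hσ : atLeastOrder K n σ r)
    (ω : ℕ → V → V → K) (a b : ℕ) (h1 : 1 ≤ b - a) (h2 : b - a ≤ r - 1) :
    P σ ω n a b = 0 := by
  have hab : b = a + (b - a) := by omega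
  rw [hab, P_translate]
  rw [← iint_restrict_eq_P]
  exact hσ (b - a) h1 h2 _

/-- Small-length vanishing for the inverse kernel. -/
lemma inv_small {A A' : ℕ → ℕ → K} {r : ℕ}
    (hd : ∀ a, A a a = 1) (h0 : ∀ a b, 1 ≤ b - a → b - a ≤ r - 1 → A a b = 0)
    (hinv : conv A A' = dd) :
    ∀ a b, 1 ≤ b - a → b - a ≤ r - 1 → A' a b = 0 := by
  intro a b hab1 hab2
  have hdd : conv A A' a b = dd a b := by rw [hinv]
  rw [dd, if_neg (by omega), conv] at hdd
  rw [Finset.sum_eq_single a] at hdd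
  · rw [hd a, one_mul] at hdd
    exact hdd
  · intro c hc hne
    rw [Finset.mem_Icc] at hc
    rw [h0 a c (by omega) (by omega), zero_mul]
  · intro h; exact absurd (Finset.mem_Icc.mpr ⟨le_refl a, by omega⟩) h

/-- The inverse kernel is the negative on lengths `≤ 2r-1`. -/
lemma inv_neg {A A' : ℕ → ℕ → K} {r : ℕ} (hr : 1 ≤ r)
    (hd : ∀ a, A a a = 1) (hd' : ∀ a, A' a a = 1)
    (h0 : ∀ a b, 1 ≤ b - a → b - a ≤ r - 1 → A a b = 0)
    (hinv : conv A A' = dd) :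
    ∀ a b, 1 ≤ b - a → b - a ≤ 2 * r - 1 → A' a b = - A a b := by
  intro a b hab1 hab2
  by_cases hsmall : b - a ≤ r - 1
  · rw [h0 a b hab1 hsmall, inv_small hd h0 hinv a b hab1 hsmall, neg_zero]
  have h0' := inv_small hd h0 hinv
  have hdd : conv A A' a b = dd a b := by rw [hinv]
  rw [dd, if_neg (by omega), conv] at hdd
  have hpair : ∑ c ∈ Finset.Icc a b, A a c * A' c b
      = ∑ c ∈ ({a, b} : Finset ℕ), A a c * A' c b := by
    symm
    apply Finset.sum_subset
    · intro x hx
      rw [Finset.mem_insert, Finset.mem_singleton] at hx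
      rw [Finset.mem_Icc]
      rcases hx with rfl | rfl
      · exact ⟨le_refl _, by omega⟩
      · exact ⟨by omega, le_refl _⟩
    · intro c hc hcn
      rw [Finset.mem_Icc] at hc
      rw [Finset.mem_insert, Finset.mem_singleton] at hcn
      push_neg at hcn
      by_cases h1 : c - a ≤ r - 1
      · rw [h0 a c (by omega) h1, zero_mul]
      · rw [h0' c b (by omega) (by omega), mul_zero]
  rw [hpair, Finset.sum_pair (by omega : a ≠ b), hd a, hd' b, one_mul, mul_one] at hdd
  linear_combination hdd



end Proof18

/-- Commutator order estimate: if `α` is a loop at `x` of order `≥ r` and `β` a loop at `x`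
of order `≥ s` with `r ≤ s`, then `[α,β] = α⋆β⋆α⁻¹⋆β⁻¹` has order `≥ r+s`, and
`∫_{[α,β]} ω_1⋯ω_{r+s} = (∫_α ω_1⋯ω_r)(∫_β ω_{r+1}⋯ω_{r+s}) - (∫_β ω_1⋯ω_s)(∫_α ω_{s+1}⋯ω_{r+s})`. -/

theorem stmt18 {V : Type*} (K : Type*) [Field K] [CharZero K] (G : Digraph' V)
    (n m r s : ℕ) (hr : 1 ≤ r) (hrs : r ≤ s)
    (σ τ : ℕ → PStep V) (hσ : IsPathMap G n σ) (hτ : IsPathMap G m τ)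
    (hloopσ : (σ 1).src = (σ n).tgt) (hloopτ : (τ 1).src = (τ m).tgt)
    (hsame : (τ 1).src = (σ 1).src)
    (hoσ : atLeastOrder K n σ r) (hoτ : atLeastOrder K m τ s) :
    (∀ l : ℕ, 1 ≤ l → l ≤ r + s - 1 → ∀ ω : Fin l → V → V → K,
      iint K (2 * (n + m))
        (concatP (2 * n + m) (concatP (n + m) (concatP n σ τ) (invP n σ)) (invP m τ)) l ω = 0) ∧
    (∀ ω : Fin (r + s) → V → V → K,
      iint K (2 * (n + m))
        (concatP (2 * n + m) (concatP (n + m) (concatP n σ τ) (invP n σ)) (invP m τ)) (r + s) ω =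
        iint K n σ r (fun i => ω (Fin.castAdd s i)) *
            iint K m τ s (fun i => ω (Fin.natAdd r i)) -
          iint K m τ s (fun i => ω (Fin.castLE (by omega) i)) *
            iint K n σ r (fun i => ω ⟨s + (i : ℕ), by have := i.isLt; omega⟩)) := by
  classical
  open Proof18 in
  have hs : 1 ≤ s := le_trans hr hrs
  set Γ : ℕ → PStep V :=
    concatP (2 * n + m) (concatP (n + m) (concatP n σ τ) (invP n σ)) (invP m τ) with hΓ
  -- the kernel of Γ is the 4-fold convolution
  have hker : ∀ ω'' : ℕ → V → V → K, P Γ ω'' (2 * (n + m))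
      = conv (conv (conv (P σ ω'' n) (P τ ω'' m)) (P (invP n σ) ω'' n)) (P (invP m τ) ω'' m) := by
    intro ω''
    rw [hΓ, show 2 * (n + m) = 2 * n + m + m by ring, P_concat,
      show 2 * n + m = n + m + n by ring, P_concat, P_concat]
  -- main evaluation
  have hmain : ∀ ω'' : ℕ → V → V → K, ∀ a b : ℕ, 1 ≤ b - a → b - a ≤ r + s →
      P Γ ω'' (2 * (n + m)) a b =
        (if b - a = r + s then
          P σ ω'' n a (a + r) * P τ ω'' m (a + r) b - P τ ω'' m a (a + s) * P σ ω'' n (a + s) b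
        else 0) := by
    intro ω'' a b h1 h2
    rw [hker ω'']
    refine commutator_kernel hr hs (supp_P σ ω'' n) (supp_P τ ω'' m)
      (supp_P (invP n σ) ω'' n) (supp_P (invP m τ) ω'' m)
      (van_km (P_diag σ ω'' n) (supp_P σ ω'' n) (fun a b h1 h2 => P_vanish hoσ ω'' a b h1 h2))
      (van_km (P_diag τ ω'' m) (supp_P τ ω'' m) (fun a b h1 h2 => P_vanish hoτ ω'' a b h1 h2))
      (van_km (P_diag (invP n σ) ω'' n) (supp_P (invP n σ) ω'' n)
        (inv_small (P_diag σ ω'' n) (fun a b h1 h2 => P_vanish hoσ ω'' a b h1 h2)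
          (P_inv_conv σ ω'' n).1))
      (van_km (P_diag (invP m τ) ω'' m) (supp_P (invP m τ) ω'' m)
        (inv_small (P_diag τ ω'' m) (fun a b h1 h2 => P_vanish hoτ ω'' a b h1 h2)
          (P_inv_conv τ ω'' m).1))
      (inv_neg hr (P_diag σ ω'' n) (P_diag (invP n σ) ω'' n)
        (fun a b h1 h2 => P_vanish hoσ ω'' a b h1 h2) (P_inv_conv σ ω'' n).1)
      (inv_neg hs (P_diag τ ω'' m) (P_diag (invP m τ) ω'' m)
        (fun a b h1 h2 => P_vanish hoτ ω'' a b h1 h2) (P_inv_conv τ ω'' m).1)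
      (P_inv_conv σ ω'' n).1 (P_inv_conv τ ω'' m).1 a b h1 h2
  constructor
  · intro l hl1 hl2 ω'
    rw [iint_eq_P]
    rw [hmain _ 0 l (by omega) (by omega)]
    rw [if_neg (by omega)]
  · intro ω
    set ext : ℕ → V → V → K :=
      fun j => if h : j < r + s then ω ⟨j, h⟩ else fun _ _ => 0 with hext
    rw [iint_eq_P]
    rw [hmain _ 0 (r + s) (by omega) (by omega)]
    rw [if_pos (by omega : r + s - 0 = r + s)]
    rw [Nat.zero_add, Nat.zero_add]
    have e1 : P σ ext n 0 r = iint K n σ r (fun i => ω (Fin.castAdd s i)) := by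
      rw [iint_eq_P]
      apply P_congr_forms
      intro j hj0 hjr
      simp only [hext]
      rw [dif_pos (show j < r + s by omega), dif_pos hjr]
      rfl
    have e2 : P τ ext m r (r + s) = iint K m τ s (fun i => ω (Fin.natAdd r i)) := by
      have h := P_translate τ ext m r s
      rw [h, iint_eq_P]
      apply P_congr_forms
      intro j hj0 hjs
      simp only [hext]
      rw [dif_pos (show r + j < r + s by omega), dif_pos hjs]
      rfl
    have e3 : P τ ext m 0 s = iint K m τ s (fun i => ω (Fin.castLE (by omega) i)) := by
      rw [iint_eq_P]
      apply P_congr_forms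
      intro j hj0 hjs
      simp only [hext]
      rw [dif_pos (show j < r + s by omega), dif_pos hjs]
      rfl
    have e4 : P σ ext n s (r + s) =
        iint K n σ r (fun i => ω ⟨s + (i : ℕ), by have := i.isLt; omega⟩) := by
      have h := P_translate σ ext n s r
      rw [show s + r = r + s by ring] at h
      rw [h, iint_eq_P]
      apply P_congr_forms
      intro j hj0 hjr
      simp only [hext]
      rw [dif_pos (show s + j < r + s by omega), dif_pos hjr]
    rw [e1, e2, e3, e4]
end

section
/- Isosceles integrals agree on the two sides of a square: suppose G contains a standard square with arrows a_1 : v_0→v_1, a_2 : v_1→v_3, a_3 : v_0→v_2, a_4 : v_2→v_3, and 1-forms ω_1,...,ω_r satisfy ω_i(a_1)+ω_i(a_2) = ω_i(a_3)+ω_i(a_4) for each i, together with the isosceles condition that the products Π_i ω_i(b_i) are invariant under permuting which factors get a_1 vs a_2 (resp. a_3 vs a_4). Then ∫_{a_1⋆a_2} ω_1···ω_r = (Π_i(ω_i(a_1)+ω_i(a_2)))/r! = (Π_i(ω_i(a_3)+ω_i(a_4)))/r! = ∫_{a_3⋆a_4} ω_1···ω_r. -/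
open Finset

attribute [local instance] Classical.propDecidable

section Aux

variable {V : Type*} {K : Type*} [Field K]

lemma filter_lt_card (r k : ℕ) (hk : k ≤ r) :
    (Finset.univ.filter fun i : Fin r => (i : ℕ) < k).card = k := by
  have : (Finset.univ.filter fun i : Fin r => (i : ℕ) < k) =
      (Finset.range k).attachFin (fun m hm => lt_of_lt_of_le (Finset.mem_range.mp hm) hk) := by
    ext i; simp [Finset.mem_attachFin]
  rw [this, Finset.card_attachFin, Finset.card_range]

lemma fin2_eq_one {a : Fin 2} (h : a ≠ 0) : a = 1 := by omega

lemma volFin_binary {r : ℕ} (g : Fin r → ℕ) (hg : ∀ i, g i ≤ 1) :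
    volFin g = Nat.factorial (Finset.univ.filter (fun j => g j = 0)).card *
      Nat.factorial (Finset.univ.filter (fun j => g j = 1)).card := by
  classical
  have hsub : Finset.image g Finset.univ ⊆ ({0, 1} : Finset ℕ) := by
    intro k hk
    simp only [Finset.mem_image] at hk
    obtain ⟨j, _, rfl⟩ := hk
    have := hg j
    simp only [Finset.mem_insert, Finset.mem_singleton]
    omega
  have := Finset.prod_subset hsub (f := fun k =>
      Nat.factorial ((Finset.univ.filter (fun j => g j = k)).card))
    (by
      intro k _ hk
      have : (Finset.univ.filter (fun j => g j = k)) = ∅ := by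
        apply Finset.filter_false_of_mem
        intro j _ hj
        exact hk (by rw [← hj]; exact Finset.mem_image_of_mem g (Finset.mem_univ j))
      simp [this])
  rw [volFin, this, Finset.prod_pair (by norm_num)]

/-- Products over subsets of equal cardinality agree, under the isosceles hypothesis. -/
lemma prod_subset_card_eq {r : ℕ} (α β : Fin r → K)
    (hiso : ∀ (b : Fin r → Bool) (e : Equiv.Perm (Fin r)),
      (∏ i, (if b (e i) then α i else β i)) = ∏ i, (if b i then α i else β i))
    (t t' : Finset (Fin r)) (h : t.card = t'.card) :
    (∏ i, (if i ∈ t then α i else β i)) = ∏ i, (if i ∈ t' then α i else β i) := by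
  classical
  have e1 : {x // x ∈ t'} ≃ {x // x ∈ t} := by
    apply Fintype.equivOfCardEq
    simp [Fintype.card_coe, h]
  have e2 : {x // ¬ x ∈ t'} ≃ {x // ¬ x ∈ t} := by
    apply Fintype.equivOfCardEq
    rw [Fintype.card_subtype_compl, Fintype.card_subtype_compl]
    simp [Fintype.card_coe, h]
  let e : Equiv.Perm (Fin r) :=
    ((Equiv.sumCompl (· ∈ t')).symm.trans (e1.sumCongr e2)).trans (Equiv.sumCompl (· ∈ t))
  have he : ∀ i, (e i ∈ t) ↔ (i ∈ t') := by
    intro i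
    by_cases hi : i ∈ t'
    · simp only [e, Equiv.trans_apply, Equiv.sumCompl_symm_apply_of_pos hi,
        Equiv.sumCongr_apply, Sum.map_inl, Equiv.sumCompl_apply_inl]
      exact iff_of_true (e1 ⟨i, hi⟩).2 hi
    · simp only [e, Equiv.trans_apply, Equiv.sumCompl_symm_apply_of_neg hi,
        Equiv.sumCongr_apply, Sum.map_inr, Equiv.sumCompl_apply_inr]
      exact iff_of_false (e2 ⟨i, hi⟩).2 hi
  calc (∏ i, (if i ∈ t then α i else β i))
      = ∏ i, (if (fun j => decide (j ∈ t)) i then α i else β i) := by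
        apply Finset.prod_congr rfl; intro i _; simp
    _ = ∏ i, (if (fun j => decide (j ∈ t)) (e i) then α i else β i) := (hiso _ e).symm
    _ = ∏ i, (if i ∈ t' then α i else β i) := by
        apply Finset.prod_congr rfl; intro i _
        simp [he i]

/-- The main computation on a single side: the two-step iterated integral equals
the product of the closed-form sums divided by `r!`. -/
lemma iint_two_step (K : Type*) [Field K] [CharZero K] {V : Type*} (x y z : V)
    (r : ℕ) (ω : Fin r → V → V → K)
    (hiso : ∀ (b : Fin r → Bool) (e : Equiv.Perm (Fin r)),
      (∏ i, (if b (e i) then ω i x y else ω i y z)) =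
        ∏ i, (if b i then ω i x y else ω i y z)) :
    iint K 2 (fun t => if t ≤ 1 then PStep.fwd x y else PStep.fwd y z) r ω =
      (∏ i, (ω i x y + ω i y z)) / (Nat.factorial r : K) := by
  classical
  set α : Fin r → K := fun i => ω i x y with hα
  set β : Fin r → K := fun i => ω i y z with hβ
  set P : ℕ → K := fun k => ∏ i : Fin r, (if (i : ℕ) < k then α i else β i) with hP
  set fk : ℕ → (Fin r → Fin 2) := fun k i => if (i : ℕ) < k then 0 else 1 with hfk
  -- Step 1: the iterated integral as a sum over k
  have step1 : iint K 2 (fun t => if t ≤ 1 then PStep.fwd x y else PStep.fwd y z) r ω =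
      ∑ k ∈ Finset.range (r + 1),
        P k / ((Nat.factorial k * Nat.factorial (r - k) : ℕ) : K) := by
    rw [iint]
    refine Finset.sum_nbij' (fun f => (Finset.univ.filter fun i => f i = 0).card)
      (fun k => fk k) ?_ ?_ ?_ ?_ ?_
    · intro f _
      rw [Finset.mem_range, Nat.lt_succ_iff]
      calc (Finset.univ.filter fun i => f i = 0).card ≤ Finset.univ.card :=
            Finset.card_filter_le _ _
        _ = r := by simp
    · intro k hk
      rw [Finset.mem_range, Nat.lt_succ_iff] at hk
      simp only [Finset.mem_filter, Finset.mem_univ, true_and]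
      intro i j hij
      by_cases hi : (i : ℕ) < k
      · by_cases hj : (j : ℕ) < k <;> simp [fk, hi, hj, Fin.le_def]
      · have hj : ¬ (j : ℕ) < k := fun hj => hi (lt_of_le_of_lt (Fin.le_def.mp hij) hj)
        simp [fk, hi, hj]
    · -- left inverse: monotone f is recovered
      intro f hf
      rw [Finset.mem_filter] at hf
      have hf' := hf.2
      set k := (Finset.univ.filter fun i => f i = 0).card with hkdef
      have key : ∀ i : Fin r, f i = 0 ↔ (i : ℕ) < k := by
        intro i
        constructor
        · intro h0
          have hT : (Finset.univ.filter fun j : Fin r => (j : ℕ) < (i : ℕ) + 1) ⊆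
              (Finset.univ.filter fun j => f j = 0) := by
            intro j hj
            simp only [Finset.mem_filter, Finset.mem_univ, true_and] at hj ⊢
            have hji : j ≤ i := Fin.le_def.mpr (by omega)
            have := hf' hji
            rw [h0] at this
            exact Fin.le_zero_iff.mp this
          have := Finset.card_le_card hT
          rw [filter_lt_card r ((i : ℕ) + 1) i.isLt] at this
          omega
        · intro hik
          by_contra h0
          have hS : (Finset.univ.filter fun j => f j = 0) ⊆
              (Finset.univ.filter fun j : Fin r => (j : ℕ) < (i : ℕ)) := by
            intro j hj
            simp only [Finset.mem_filter, Finset.mem_univ, true_and] at hj ⊢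
            by_contra hji
            have hij : i ≤ j := Fin.le_def.mpr (by omega)
            have := hf' hij
            rw [hj] at this
            exact h0 (Fin.le_zero_iff.mp this)
          have := Finset.card_le_card hS
          rw [filter_lt_card r (i : ℕ) (le_of_lt i.isLt)] at this
          omega
      funext i
      by_cases hi : (i : ℕ) < k
      · have h0 := (key i).mpr hi
        simp [fk, hi, h0]
      · have h1 : f i = 1 := fin2_eq_one (fun h => hi ((key i).mp h))
        simp [fk, hi, h1]
    · -- right inverse
      intro k hk
      rw [Finset.mem_range, Nat.lt_succ_iff] at hk
      show (Finset.univ.filter fun i => fk k i = 0).card = k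
      have : (Finset.univ.filter fun i => fk k i = 0) =
          (Finset.univ.filter fun i : Fin r => (i : ℕ) < k) := by
        ext i
        simp only [Finset.mem_filter, Finset.mem_univ, true_and]
        by_cases hi : (i : ℕ) < k <;> simp [fk, hi]
      rw [this, filter_lt_card r k hk]
    · -- values agree
      intro f hf
      rw [Finset.mem_filter] at hf
      set k := (Finset.univ.filter fun i => f i = 0).card with hkdef
      have hk : k ≤ r := by
        calc k ≤ Finset.univ.card := Finset.card_filter_le _ _
          _ = r := by simp
      have key : ∀ i : Fin r, f i = 0 ↔ (i : ℕ) < k := by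
        intro i
        constructor
        · intro h0
          have hT : (Finset.univ.filter fun j : Fin r => (j : ℕ) < (i : ℕ) + 1) ⊆
              (Finset.univ.filter fun j => f j = 0) := by
            intro j hj
            simp only [Finset.mem_filter, Finset.mem_univ, true_and] at hj ⊢
            have hji : j ≤ i := Fin.le_def.mpr (by omega)
            have := hf.2 hji
            rw [h0] at this
            exact Fin.le_zero_iff.mp this
          have := Finset.card_le_card hT
          rw [filter_lt_card r ((i : ℕ) + 1) i.isLt] at this
          omega
        · intro hik
          by_contra h0
          have hS : (Finset.univ.filter fun j => f j = 0) ⊆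
              (Finset.univ.filter fun j : Fin r => (j : ℕ) < (i : ℕ)) := by
            intro j hj
            simp only [Finset.mem_filter, Finset.mem_univ, true_and] at hj ⊢
            by_contra hji
            have hij : i ≤ j := Fin.le_def.mpr (by omega)
            have := hf.2 hij
            rw [hj] at this
            exact h0 (Fin.le_zero_iff.mp this)
          have := Finset.card_le_card hS
          rw [filter_lt_card r (i : ℕ) (le_of_lt i.isLt)] at this
          omega
      have hnum : (∏ i, PStep.pair (ω i)
          ((fun t => if t ≤ 1 then PStep.fwd x y else PStep.fwd y z) ((f i : ℕ) + 1))) = P k := by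
        apply Finset.prod_congr rfl
        intro i _
        by_cases hi : (i : ℕ) < k
        · have h0 : f i = 0 := (key i).mpr hi
          simp [h0, hi, PStep.pair, hP, hα]
        · have h1 : f i = 1 := fin2_eq_one (fun h => hi ((key i).mp h))
          simp [h1, hi, PStep.pair, hP, hβ]
      have hvol : volFin (fun i => ((f i : Fin 2) : ℕ)) =
          Nat.factorial k * Nat.factorial (r - k) := by
        rw [volFin_binary _ (fun i => by omega)]
        congr 1
        · congr 1
          rw [hkdef]
          congr 1
          ext j
          simp only [Finset.mem_filter, Finset.mem_univ, true_and]
          omega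
        · congr 1
          have h01 : (Finset.univ.filter fun j => ((f j : Fin 2) : ℕ) = 1) =
              (Finset.univ.filter fun j => ¬ (f j = 0)) := by
            ext j
            simp only [Finset.mem_filter, Finset.mem_univ, true_and]
            omega
          rw [h01]
          have := Finset.card_filter_add_card_filter_not
            (s := (Finset.univ : Finset (Fin r))) (fun j => f j = 0)
          have hcu : (Finset.univ : Finset (Fin r)).card = r := by simp
          omega
      rw [hnum, hvol]
    -- Step 2: binomial-type expansion of the product
  have step2 : (∏ i, (α i + β i)) =
      ∑ k ∈ Finset.range (r + 1), (r.choose k : K) * P k := by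
    rw [Finset.prod_add]
    have hQ : ∀ t : Finset (Fin r), (∏ i ∈ t, α i) * (∏ i ∈ Finset.univ \ t, β i) =
        ∏ i, (if i ∈ t then α i else β i) := by
      intro t
      rw [Finset.prod_ite]
      congr 1
      · apply Finset.prod_congr _ (fun _ _ => rfl)
        ext i; simp
      · apply Finset.prod_congr _ (fun _ _ => rfl)
        ext i; simp
    calc ∑ t ∈ Finset.univ.powerset, (∏ i ∈ t, α i) * ∏ i ∈ Finset.univ \ t, β i
        = ∑ t ∈ Finset.univ.powerset, ∏ i, (if i ∈ t then α i else β i) :=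
          Finset.sum_congr rfl (fun t _ => hQ t)
      _ = ∑ k ∈ Finset.range ((Finset.univ : Finset (Fin r)).card + 1),
            ∑ t ∈ Finset.powersetCard k Finset.univ, ∏ i, (if i ∈ t then α i else β i) :=
          Finset.sum_powerset _ _
      _ = ∑ k ∈ Finset.range (r + 1), (r.choose k : K) * P k := by
          rw [show (Finset.univ : Finset (Fin r)).card = r by simp]
          apply Finset.sum_congr rfl
          intro k hk
          rw [Finset.mem_range, Nat.lt_succ_iff] at hk
          have hall : ∀ t ∈ Finset.powersetCard k (Finset.univ : Finset (Fin r)),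
              (∏ i, (if i ∈ t then α i else β i)) = P k := by
            intro t ht
            rw [Finset.mem_powersetCard] at ht
            have := prod_subset_card_eq α β hiso t
              (Finset.univ.filter fun i : Fin r => (i : ℕ) < k)
              (by rw [ht.2, filter_lt_card r k hk])
            rw [this, hP]
            apply Finset.prod_congr rfl
            intro i _
            by_cases hi : (i : ℕ) < k <;> simp [hi]
          rw [Finset.sum_congr rfl hall, Finset.sum_const, Finset.card_powersetCard,
            nsmul_eq_mul]
          simp
  rw [step1, step2, Finset.sum_div]
  apply Finset.sum_congr rfl
  intro k hk
  rw [Finset.mem_range, Nat.lt_succ_iff] at hk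
  have hfact := Nat.choose_mul_factorial_mul_factorial hk
  have h1 : ((Nat.factorial k * Nat.factorial (r - k) : ℕ) : K) ≠ 0 := by
    exact_mod_cast Nat.cast_ne_zero.mpr
      (Nat.mul_ne_zero (Nat.factorial_ne_zero k) (Nat.factorial_ne_zero (r - k)))
  have h2 : ((Nat.factorial r : ℕ) : K) ≠ 0 :=
    Nat.cast_ne_zero.mpr (Nat.factorial_ne_zero r)
  rw [div_eq_div_iff h1 h2]
  have : ((Nat.factorial r : ℕ) : K) =
      (r.choose k : K) * ((Nat.factorial k * Nat.factorial (r - k) : ℕ) : K) := by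
    rw [← hfact]; push_cast; ring
  rw [this]; ring

end Aux

/-- Isosceles iterated integrals agree on the two sides of a standard square:
`∫_{a_1⋆a_2} ω_1⋯ω_r = Π_i(ω_i(a_1)+ω_i(a_2))/r! = Π_i(ω_i(a_3)+ω_i(a_4))/r! = ∫_{a_3⋆a_4} ω_1⋯ω_r`. -/
theorem stmt19 {V : Type*} (K : Type*) [Field K] [CharZero K] (G : Digraph' V)
    (v0 v1 v2 v3 : V)
    (ha1 : G.Arrow v0 v1) (ha2 : G.Arrow v1 v3) (ha3 : G.Arrow v0 v2) (ha4 : G.Arrow v2 v3)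
    (r : ℕ) (ω : Fin r → V → V → K)
    (hcl : ∀ i, ω i v0 v1 + ω i v1 v3 = ω i v0 v2 + ω i v2 v3)
    (hiso12 : ∀ (b : Fin r → Bool) (e : Equiv.Perm (Fin r)),
      (∏ i, (if b (e i) then ω i v0 v1 else ω i v1 v3)) =
        ∏ i, (if b i then ω i v0 v1 else ω i v1 v3))
    (hiso34 : ∀ (b : Fin r → Bool) (e : Equiv.Perm (Fin r)),
      (∏ i, (if b (e i) then ω i v0 v2 else ω i v2 v3)) =
        ∏ i, (if b i then ω i v0 v2 else ω i v2 v3)) :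
    iint K 2 (fun t => if t ≤ 1 then PStep.fwd v0 v1 else PStep.fwd v1 v3) r ω =
        (∏ i, (ω i v0 v1 + ω i v1 v3)) / (Nat.factorial r : K) ∧
    (∏ i, (ω i v0 v1 + ω i v1 v3)) / (Nat.factorial r : K) =
        (∏ i, (ω i v0 v2 + ω i v2 v3)) / (Nat.factorial r : K) ∧
    (∏ i, (ω i v0 v2 + ω i v2 v3)) / (Nat.factorial r : K) =
        iint K 2 (fun t => if t ≤ 1 then PStep.fwd v0 v2 else PStep.fwd v2 v3) r ω := by
  refine ⟨iint_two_step K v0 v1 v3 r ω hiso12, ?_, (iint_two_step K v0 v2 v3 r ω hiso34).symm⟩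
  congr 1
  exact Finset.prod_congr rfl (fun i _ => hcl i)
end
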